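/- arXiv:2011.10333 — 3 statements merged into one kernel-verified Lean document; each statement's English description precedes it below -/
import Mathlib

section
/- Let q ∈ (-1,1) \ {0} and let α, γ be the operators on ℓ²(ℕ) ⊗ ℓ²(ℤ) defined on basis vectors by α(e_i ⊗ f_j) = √(1 - q^{2i}) e_{i-1} ⊗ f_j and γ(e_i ⊗ f_j) = q^i e_i ⊗ f_{j+1}. Then these operators are bounded and satisfy the SU_q(2) relations: γ*γ = γγ*, αγ = qγα, αγ* = qγ*α, α*α + γ*γ = 1, and αα* + q²γ*γ = 1. -/
noncomputable section SUq2Aux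

open scoped ComplexConjugate ENNReal

local notation "H" => lp (fun _ : ℕ × ℤ => ℂ) 2

namespace SUq2Aux

lemma shift_summable (σ : ℕ × ℤ → ℕ × ℤ) (w : ℕ × ℤ → ℂ) (hw : ∀ k, ‖w k‖ ≤ 1)
    (hσ : Set.InjOn σ {k | w k ≠ 0}) (x : H) :
    Summable (fun k => ‖w k * x (σ k)‖ ^ (2 : ℝ)) := by
  have hx : Summable (fun m : ℕ × ℤ => ‖x m‖ ^ (2 : ℝ)) := by
    have := (lp.memℓp x).summable (p := 2) (by norm_num)
    simpa using this
  rw [← summable_subtype_and_compl (s := {k | w k ≠ 0})]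
  constructor
  · have hinj : Function.Injective (({k | w k ≠ 0} : Set (ℕ × ℤ)).restrict σ) :=
      hσ.injective
    have hs : Summable (fun k : {k | w k ≠ 0} => ‖x (σ k)‖ ^ (2 : ℝ)) :=
      hx.comp_injective hinj
    refine Summable.of_nonneg_of_le (fun k => ?_) (fun k => ?_) hs
    · positivity
    · refine Real.rpow_le_rpow (norm_nonneg _) ?_ (by norm_num)
      calc ‖w (k : ℕ × ℤ) * x (σ k)‖ = ‖w (k : ℕ × ℤ)‖ * ‖x (σ k)‖ := norm_mul _ _
        _ ≤ 1 * ‖x (σ k)‖ := by gcongr; exact hw _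
        _ = ‖x (σ k)‖ := one_mul _
  · refine summable_zero.congr fun k => ?_
    have hk : w (k : ℕ × ℤ) = 0 := by
      have := k.2
      simp only [Set.mem_compl_iff, Set.mem_setOf_eq, not_not] at this
      exact this
    simp [hk, Real.zero_rpow (by norm_num : (2:ℝ) ≠ 0)]

/-- The weighted composition operator `x ↦ (k ↦ w k * x (σ k))` on `ℓ²(ℕ × ℤ)`. -/
def shiftOp (σ : ℕ × ℤ → ℕ × ℤ) (w : ℕ × ℤ → ℂ) (hw : ∀ k, ‖w k‖ ≤ 1)
    (hσ : Set.InjOn σ {k | w k ≠ 0}) : H →L[ℂ] H :=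
  LinearMap.mkContinuous
    { toFun := fun x => ⟨fun k => w k * x (σ k),
        memℓp_gen (by simpa using shift_summable σ w hw hσ x)⟩
      map_add' := by
        intro x y
        apply lp.ext
        funext k
        simp only [lp.coeFn_add, Pi.add_apply]
        change w k * (x (σ k) + y (σ k)) = w k * x (σ k) + w k * y (σ k)
        ring
      map_smul' := by
        intro c x
        apply lp.ext
        funext k
        simp only [lp.coeFn_smul, Pi.smul_apply, RingHom.id_apply, smul_eq_mul]
        change w k * (c * x (σ k)) = c * (w k * x (σ k))
        ring }
    1
    (by
      intro x
      rw [one_mul]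
      have h2 : (0 : ℝ) < (2 : ℝ≥0∞).toReal := by norm_num
      by_contra hlt
      push_neg at hlt
      have hrw := Real.rpow_lt_rpow (norm_nonneg x) hlt h2
      have hle : ‖(⟨fun k => w k * x (σ k),
          memℓp_gen (by simpa using shift_summable σ w hw hσ x)⟩ : H)‖ ^ (2:ℝ≥0∞).toReal
          ≤ ‖x‖ ^ (2:ℝ≥0∞).toReal := by
        rw [lp.norm_rpow_eq_tsum h2, lp.norm_rpow_eq_tsum h2]
        have hsum := shift_summable σ w hw hσ x
        have hx : Summable (fun m : ℕ × ℤ => ‖x m‖ ^ (2 : ℝ)) := by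
          have := (lp.memℓp x).summable (p := 2) (by norm_num)
          simpa using this
        have hsupp : Function.support (fun k => ‖w k * x (σ k)‖ ^ (2:ℝ))
            ⊆ {k | w k ≠ 0} := by
          intro k hk
          simp only [Function.mem_support] at hk
          intro h0
          exact hk (by simp [h0, Real.zero_rpow (by norm_num : (2:ℝ) ≠ 0)])
        have e1 : ∑' (k : {k | w k ≠ 0}), ‖w (k:ℕ×ℤ) * x (σ k)‖ ^ (2:ℝ)
            = ∑' k, ‖w k * x (σ k)‖ ^ (2:ℝ) := tsum_subtype_eq_of_support_subset hsupp
        have e2 : ∑' (k : {k | w k ≠ 0}), ‖w (k:ℕ×ℤ) * x (σ k)‖ ^ (2:ℝ)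
            ≤ ∑' m, ‖x m‖ ^ (2:ℝ) := by
          refine Summable.tsum_le_tsum_of_inj (({k | w k ≠ 0} : Set (ℕ×ℤ)).restrict σ)
            hσ.injective (fun c _ => by positivity) (fun k => ?_)
            (hsum.subtype _) hx
          refine Real.rpow_le_rpow (norm_nonneg _) ?_ (by norm_num)
          calc ‖w (k : ℕ × ℤ) * x (σ k)‖ = ‖w (k : ℕ × ℤ)‖ * ‖x (σ k)‖ := norm_mul _ _
            _ ≤ 1 * ‖x (σ k)‖ := by gcongr; exact hw _
            _ = ‖x (σ k)‖ := one_mul _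
        calc ∑' k, ‖(fun k => w k * x (σ k)) k‖ ^ (2:ℝ≥0∞).toReal
            = ∑' k, ‖w k * x (σ k)‖ ^ (2:ℝ) := by norm_num
          _ ≤ ∑' m, ‖x m‖ ^ (2:ℝ) := e1 ▸ e2
          _ = ∑' m, ‖x m‖ ^ (2:ℝ≥0∞).toReal := by norm_num
      exact absurd hle (not_le.2 hrw))

lemma shiftOp_apply (σ : ℕ × ℤ → ℕ × ℤ) (w : ℕ × ℤ → ℂ) (hw : ∀ k, ‖w k‖ ≤ 1)
    (hσ : Set.InjOn σ {k | w k ≠ 0}) (x : H) (k : ℕ × ℤ) :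
    (shiftOp σ w hw hσ x : ∀ _ : ℕ × ℤ, ℂ) k = w k * x (σ k) := rfl

lemma shiftOp_single (σ : ℕ × ℤ → ℕ × ℤ) (w : ℕ × ℤ → ℂ) (hw : ∀ k, ‖w k‖ ≤ 1)
    (hσ : Set.InjOn σ {k | w k ≠ 0}) (k m₀ : ℕ × ℤ) (hm : σ m₀ = k)
    (h2 : ∀ m, w m ≠ 0 → σ m = k → m = m₀) :
    shiftOp σ w hw hσ (lp.single 2 k 1) = w m₀ • lp.single 2 m₀ 1 := by
  apply lp.ext
  funext m
  rw [shiftOp_apply, lp.coeFn_smul, Pi.smul_apply]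
  by_cases hm' : m = m₀
  · subst hm'
    rw [lp.single_apply_self, hm, lp.single_apply_self]
    simp
  · rw [lp.single_apply_ne 2 m₀ _ hm']
    by_cases hw0 : w m = 0
    · simp [hw0]
    · rw [lp.single_apply_ne 2 k _ (fun h => hm' (h2 m hw0 h))]
      simp

lemma shiftOp_single_zero (σ : ℕ × ℤ → ℕ × ℤ) (w : ℕ × ℤ → ℂ) (hw : ∀ k, ‖w k‖ ≤ 1)
    (hσ : Set.InjOn σ {k | w k ≠ 0}) (k : ℕ × ℤ)
    (h : ∀ m, w m ≠ 0 → σ m ≠ k) :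
    shiftOp σ w hw hσ (lp.single 2 k 1) = 0 := by
  apply lp.ext
  funext m
  rw [shiftOp_apply]
  by_cases hw0 : w m = 0
  · simp [hw0]
  · rw [lp.single_apply_ne 2 k _ (h m hw0)]
    simp

lemma ext_single {F : Type*} [NormedAddCommGroup F] [NormedSpace ℂ F] (A B : H →L[ℂ] F)
    (h : ∀ k : ℕ × ℤ, A (lp.single 2 k 1) = B (lp.single 2 k 1)) : A = B := by
  ext x
  have hx : HasSum (fun k : ℕ × ℤ => lp.single 2 k (x k)) x :=
    lp.hasSum_single (by norm_num) x
  have key : ∀ k, A (lp.single 2 k (x k)) = B (lp.single 2 k (x k)) := by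
    intro k
    have hs : (lp.single 2 k (x k) : H) = x k • (lp.single 2 k 1 : H) := by
      rw [← lp.single_smul]
      norm_num
    rw [hs, map_smul, map_smul, h]
  have hA : HasSum (fun k => A (lp.single 2 k (x k))) (A x) := hx.mapL A
  have hB : HasSum (fun k => B (lp.single 2 k (x k))) (B x) := hx.mapL B
  rw [show (fun k => A (lp.single 2 k (x k))) = (fun k => B (lp.single 2 k (x k)))
    from funext key] at hA
  exact hA.unique hB

lemma eq_adjoint_of_single (A B : H →L[ℂ] H)
    (h : ∀ k m : ℕ × ℤ,
      (inner ℂ (A (lp.single 2 k 1)) ((lp.single 2 m 1 : H)) : ℂ)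
        = inner ℂ ((lp.single 2 k 1 : H)) (B (lp.single 2 m 1))) :
    A = ContinuousLinearMap.adjoint B := by
  rw [ContinuousLinearMap.eq_adjoint_iff]
  have h1 : ∀ (m : ℕ × ℤ) (x : H),
      (inner ℂ ((lp.single 2 m 1 : H)) (A x) : ℂ) = inner ℂ (B (lp.single 2 m 1)) x := by
    intro m
    have e := ext_single ((innerSL ℂ ((lp.single 2 m 1 : H))).comp A)
      (innerSL ℂ (B (lp.single 2 m 1)))
      (by
        intro k
        simp only [ContinuousLinearMap.comp_apply, innerSL_apply_apply]
        have := congrArg (starRingEnd ℂ) (h k m)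
        simpa [inner_conj_symm] using this)
    intro x
    have := ContinuousLinearMap.ext_iff.1 e x
    simpa only [ContinuousLinearMap.comp_apply, innerSL_apply_apply] using this
  intro x y
  have h2 := ext_single (innerSL ℂ (A x)) ((innerSL ℂ x).comp B)
    (by
      intro m
      simp only [ContinuousLinearMap.comp_apply, innerSL_apply_apply]
      have := congrArg (starRingEnd ℂ) (h1 m x)
      simpa [inner_conj_symm] using this)
  have := ContinuousLinearMap.ext_iff.1 h2 y
  simpa only [ContinuousLinearMap.comp_apply, innerSL_apply_apply] using this

lemma inner_single_single (k m : ℕ × ℤ) :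
    (inner ℂ (lp.single 2 k 1 : H) (lp.single 2 m 1 : H) : ℂ) = if k = m then 1 else 0 := by
  rw [lp.inner_single_left]
  by_cases h : k = m
  · subst h
    simp [lp.single_apply_self, RCLike.inner_apply]
  · rw [lp.single_apply_ne 2 m _ h]
    simp [h, RCLike.inner_apply]

end SUq2Aux

end SUq2Aux

local notation "H" => lp (fun _ : ℕ × ℤ => ℂ) 2

set_option maxHeartbeats 2000000 in
open SUq2Aux in
/-- Existence of the concrete `SU_q(2)` generators: for `q ∈ (-1,1) \ {0}` there exist
bounded operators `α, γ` on `ℓ²(ℕ) ⊗ ℓ²(ℤ) = ℓ²(ℕ × ℤ)` acting on the standard basis by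
`α(e_i ⊗ f_j) = √(1 - q^{2i}) e_{i-1} ⊗ f_j` and `γ(e_i ⊗ f_j) = q^i e_i ⊗ f_{j+1}`
(with `e_{-1} = 0`, which is automatic since the coefficient vanishes at `i = 0`),
and these satisfy the `SU_q(2)` relations. -/
theorem stmt10 (q : ℝ) (hq : q ∈ Set.Ioo (-1 : ℝ) 1) (hq0 : q ≠ 0) :
    ∃ α γ : lp (fun _ : ℕ × ℤ => ℂ) 2 →L[ℂ] lp (fun _ : ℕ × ℤ => ℂ) 2,
      (∀ (i : ℕ) (j : ℤ), α (lp.single 2 (i, j) (1 : ℂ))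
          = ((Real.sqrt (1 - q ^ (2 * i)) : ℝ) : ℂ) • lp.single 2 (i - 1, j) (1 : ℂ)) ∧
      (∀ (i : ℕ) (j : ℤ), γ (lp.single 2 (i, j) (1 : ℂ))
          = ((q : ℂ) ^ i) • lp.single 2 (i, j + 1) (1 : ℂ)) ∧
      ContinuousLinearMap.adjoint γ * γ = γ * ContinuousLinearMap.adjoint γ ∧
      α * γ = (q : ℂ) • (γ * α) ∧
      α * ContinuousLinearMap.adjoint γ
        = (q : ℂ) • (ContinuousLinearMap.adjoint γ * α) ∧
      ContinuousLinearMap.adjoint α * α + ContinuousLinearMap.adjoint γ * γ = 1 ∧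
      α * ContinuousLinearMap.adjoint α
        + ((q : ℂ) ^ 2) • (ContinuousLinearMap.adjoint γ * γ) = 1 := by
  obtain ⟨hq1, hq2⟩ := hq
  have habs : |q| < 1 := abs_lt.2 ⟨hq1, hq2⟩
  set c : ℕ → ℝ := fun i => Real.sqrt (1 - q ^ (2 * i)) with hc
  have hqile : ∀ i : ℕ, q ^ (2 * i) ≤ 1 := by
    intro i
    rw [pow_mul]
    exact pow_le_one₀ (sq_nonneg q) ((sq_le_one_iff_abs_le_one (a := q)).2 habs.le)
  have hqnonneg : ∀ i : ℕ, 0 ≤ 1 - q ^ (2 * i) := fun i => by linarith [hqile i]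
  have hc0 : c 0 = 0 := by simp [hc]
  have hcne : ∀ i : ℕ, c i ≠ 0 → i ≠ 0 := by
    intro i h h0
    exact h (h0 ▸ hc0)
  have hcle : ∀ i : ℕ, ‖((c i : ℝ) : ℂ)‖ ≤ 1 := by
    intro i
    rw [Complex.norm_real, Real.norm_eq_abs, abs_of_nonneg (Real.sqrt_nonneg _)]
    have h0 : 0 ≤ q ^ (2 * i) := by rw [pow_mul]; positivity
    exact Real.sqrt_le_one.mpr (by linarith)
  have hqple : ∀ i : ℕ, ‖((q : ℂ)) ^ i‖ ≤ 1 := by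
    intro i
    rw [norm_pow, Complex.norm_real, Real.norm_eq_abs]
    exact pow_le_one₀ (abs_nonneg q) habs.le
  have hcsq : ∀ i : ℕ, ((c i : ℝ) : ℂ) * ((c i : ℝ) : ℂ) = 1 - (q : ℂ) ^ (2 * i) := by
    intro i
    have : c i * c i = 1 - q ^ (2 * i) := Real.mul_self_sqrt (hqnonneg i)
    calc ((c i : ℝ) : ℂ) * ((c i : ℝ) : ℂ) = ((c i * c i : ℝ) : ℂ) := by push_cast; ring
      _ = ((1 - q ^ (2 * i) : ℝ) : ℂ) := by rw [this]
      _ = 1 - (q : ℂ) ^ (2 * i) := by push_cast; ring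
  -- the four operators
  set A : H →L[ℂ] H := shiftOp (fun m => (m.1 + 1, m.2)) (fun m => ((c (m.1 + 1) : ℝ) : ℂ))
    (fun k => hcle _) (show Set.InjOn _ _ by
      intro m _ n _ h
      obtain ⟨h1, h2⟩ := Prod.ext_iff.1 h
      simp only at h1 h2
      exact Prod.ext (by omega) h2) with hA
  set As : H →L[ℂ] H := shiftOp (fun m => (m.1 - 1, m.2)) (fun m => ((c m.1 : ℝ) : ℂ))
    (fun k => hcle _) (show Set.InjOn _ _ by
      intro m hm n hn h
      simp only [Set.mem_setOf_eq, Complex.ofReal_ne_zero] at hm hn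
      have hm1 := hcne _ hm
      have hn1 := hcne _ hn
      obtain ⟨h1, h2⟩ := Prod.ext_iff.1 h
      simp only at h1 h2
      exact Prod.ext (by omega) h2) with hAs
  set G : H →L[ℂ] H := shiftOp (fun m => (m.1, m.2 - 1)) (fun m => (q : ℂ) ^ m.1)
    (fun k => hqple _) (show Set.InjOn _ _ by
      intro m _ n _ h
      obtain ⟨h1, h2⟩ := Prod.ext_iff.1 h
      simp only at h1 h2
      exact Prod.ext h1 (by omega)) with hG
  set Gs : H →L[ℂ] H := shiftOp (fun m => (m.1, m.2 + 1)) (fun m => (q : ℂ) ^ m.1)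
    (fun k => hqple _) (show Set.InjOn _ _ by
      intro m _ n _ h
      obtain ⟨h1, h2⟩ := Prod.ext_iff.1 h
      simp only at h1 h2
      exact Prod.ext h1 (by omega)) with hGs
  -- action on basis vectors
  have hAone : ∀ (i : ℕ) (j : ℤ), A (lp.single 2 (i, j) 1)
      = ((c i : ℝ) : ℂ) • lp.single 2 (i - 1, j) 1 := by
    rintro (_ | i) j
    · rw [hA, shiftOp_single_zero _ _ _ _ _ (by
        intro m _ hm
        exact absurd (Prod.ext_iff.1 hm).1 (by simp)), hc0]
      simp
    · rw [hA, shiftOp_single _ _ _ _ (i + 1, j) (i, j) rfl (by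
        intro m _ hm
        obtain ⟨h1, h2⟩ := Prod.ext_iff.1 hm
        simp only at h1 h2
        exact Prod.ext (by omega) h2)]
      simp
  have hAsone : ∀ (i : ℕ) (j : ℤ), As (lp.single 2 (i, j) 1)
      = ((c (i + 1) : ℝ) : ℂ) • lp.single 2 (i + 1, j) 1 := by
    intro i j
    rw [hAs, shiftOp_single _ _ _ _ (i, j) (i + 1, j) (by simp) (by
      intro m hm h
      simp only [Set.mem_setOf_eq, Complex.ofReal_ne_zero] at hm
      have := hcne _ hm
      obtain ⟨h1, h2⟩ := Prod.ext_iff.1 h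
      simp only at h1 h2
      exact Prod.ext (by omega) h2)]
  have hGone : ∀ (i : ℕ) (j : ℤ), G (lp.single 2 (i, j) 1)
      = ((q : ℂ) ^ i) • lp.single 2 (i, j + 1) 1 := by
    intro i j
    rw [hG, shiftOp_single _ _ _ _ (i, j) (i, j + 1) (by simp) (by
      intro m _ h
      obtain ⟨h1, h2⟩ := Prod.ext_iff.1 h
      simp only at h1 h2
      exact Prod.ext h1 (by omega))]
  have hGsone : ∀ (i : ℕ) (j : ℤ), Gs (lp.single 2 (i, j) 1)
      = ((q : ℂ) ^ i) • lp.single 2 (i, j - 1) 1 := by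
    intro i j
    rw [hGs, shiftOp_single _ _ _ _ (i, j) (i, j - 1) (by simp) (by
      intro m _ h
      obtain ⟨h1, h2⟩ := Prod.ext_iff.1 h
      simp only at h1 h2
      exact Prod.ext h1 (by omega))]
  -- adjoints
  have hadjG : ContinuousLinearMap.adjoint G = Gs := by
    refine (eq_adjoint_of_single Gs G ?_).symm
    rintro ⟨i, j⟩ ⟨a, b⟩
    rw [hGsone, hGone, inner_smul_left, inner_smul_right,
      inner_single_single, inner_single_single]
    by_cases h : a = i ∧ b = j - 1
    · obtain ⟨rfl, rfl⟩ := h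
      simp [← Complex.ofReal_pow, Complex.conj_ofReal]
    · rw [if_neg (by simp [Prod.ext_iff]; omega), if_neg (by simp [Prod.ext_iff]; omega)]
      simp
  have hadjA : ContinuousLinearMap.adjoint A = As := by
    refine (eq_adjoint_of_single As A ?_).symm
    rintro ⟨i, j⟩ ⟨a, b⟩
    rw [hAsone, hAone, inner_smul_left, inner_smul_right,
      inner_single_single, inner_single_single]
    by_cases h : a = i + 1 ∧ b = j
    · obtain ⟨rfl, rfl⟩ := h
      rw [if_pos rfl, if_pos (by simp)]
      simp [← Complex.ofReal_pow, Complex.conj_ofReal]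
    · rw [if_neg (by simp [Prod.ext_iff]; tauto)]
      by_cases h' : (i, j) = (a - 1, b)
      · obtain ⟨h1, h2⟩ := Prod.ext_iff.1 h'
        simp only at h1 h2
        have ha : a = 0 := by
          rcases Nat.eq_zero_or_pos a with h0 | h0
          · exact h0
          · exact absurd ⟨by omega, h2.symm⟩ h
        rw [if_pos h', ha, hc0]
        simp
      · rw [if_neg h']
        simp
  refine ⟨A, G, hAone, hGone, ?_, ?_, ?_, ?_, ?_⟩
  · -- γ*γ = γγ*
    rw [hadjG]
    apply ext_single
    rintro ⟨i, j⟩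
    rw [ContinuousLinearMap.mul_apply, ContinuousLinearMap.mul_apply, hGone, map_smul,
      hGsone, hGsone, map_smul, hGone]
    norm_num
  · -- αγ = q γα
    apply ext_single
    rintro ⟨i, j⟩
    rw [ContinuousLinearMap.mul_apply, ContinuousLinearMap.smul_apply,
      ContinuousLinearMap.mul_apply, hGone, map_smul, hAone, hAone, map_smul, hGone,
      smul_smul, smul_smul, smul_smul]
    rcases i with _ | i
    · rw [hc0]
      simp
    · simp only [Nat.add_sub_cancel]
      congr 1
      ring
  · -- αγ* = q γ*α
    rw [hadjG]
    apply ext_single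
    rintro ⟨i, j⟩
    rw [ContinuousLinearMap.mul_apply, ContinuousLinearMap.smul_apply,
      ContinuousLinearMap.mul_apply, hGsone, map_smul, hAone, hAone, map_smul, hGsone,
      smul_smul, smul_smul, smul_smul]
    rcases i with _ | i
    · rw [hc0]
      simp
    · simp only [Nat.add_sub_cancel]
      congr 1
      ring
  · -- α*α + γ*γ = 1
    rw [hadjA, hadjG]
    apply ext_single
    rintro ⟨i, j⟩
    rw [ContinuousLinearMap.add_apply, ContinuousLinearMap.mul_apply,
      ContinuousLinearMap.mul_apply, ContinuousLinearMap.one_apply, hAone, map_smul, hGone,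
      map_smul, hGsone]
    rcases i with _ | i
    · rw [hc0]
      simp
    · rw [Nat.add_sub_cancel, hAsone, smul_smul, smul_smul]
      have hj : (j : ℤ) + 1 - 1 = j := by ring
      rw [hj, ← add_smul]
      conv_rhs => rw [show (lp.single 2 ((i + 1 : ℕ), j) 1 : lp (fun _ : ℕ × ℤ => ℂ) 2)
        = (1 : ℂ) • lp.single 2 ((i + 1 : ℕ), j) 1 from (one_smul ℂ _).symm]
      congr 1
      linear_combination hcsq (i + 1)
  · -- αα* + q²γ*γ = 1
    rw [hadjA, hadjG]
    apply ext_single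
    rintro ⟨i, j⟩
    rw [ContinuousLinearMap.add_apply, ContinuousLinearMap.smul_apply,
      ContinuousLinearMap.mul_apply, ContinuousLinearMap.mul_apply,
      ContinuousLinearMap.one_apply, hAsone, map_smul, hAone, hGone, map_smul, hGsone,
      Nat.add_sub_cancel, smul_smul, smul_smul, smul_smul]
    have hj : (j : ℤ) + 1 - 1 = j := by ring
    rw [hj, ← add_smul]
    conv_rhs => rw [show (lp.single 2 ((i : ℕ), j) 1 : lp (fun _ : ℕ × ℤ => ℂ) 2)
      = (1 : ℂ) • lp.single 2 ((i : ℕ), j) 1 from (one_smul ℂ _).symm]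
    congr 1
    linear_combination hcsq (i + 1)
end

section
/- Let q ∈ (-1,1)\{0} and let φ be the Haar state on SU_q(2), defined on operators x on ℓ²(ℕ) ⊗ ℓ²(ℤ) by φ(x) = (1-q²) Σ_{k∈ℕ} q^{2k} ⟨e_k ⊗ f_0, x (e_k ⊗ f_0)⟩. Then φ is a state (φ(1) = 1 and φ(x*x) ≥ 0 for all x), and for the basis monomials x = α^k γ^l (γ*)^m (with k ∈ ℤ, l, m ∈ ℕ, and α^k := (α*)^{|k|} for k < 0), φ(x) = 0 unless k = 0 and l = m. -/
open scoped ComplexOrder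

noncomputable section
namespace SUq2Aux

abbrev H := lp (fun _ : ℕ × ℤ => ℂ) 2

lemma inner_ss (a b : ℕ × ℤ) :
    (inner ℂ (lp.single 2 a (1:ℂ) : H) (lp.single 2 b (1:ℂ)) : ℂ) = if a = b then 1 else 0 := by
  rw [lp.inner_single_left, RCLike.inner_apply, lp.single_apply]
  split_ifs <;> simp_all

lemma coord_eq_inner (f : H) (a : ℕ × ℤ) : f a = inner ℂ (lp.single 2 a (1:ℂ)) f := by
  rw [lp.inner_single_left, RCLike.inner_apply]; simp

lemma adjoint_coord (T : H →L[ℂ] H) (v : H) (a : ℕ × ℤ) :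
    (ContinuousLinearMap.adjoint T v) a = inner ℂ (T (lp.single 2 a (1:ℂ))) v := by
  rw [coord_eq_inner, ContinuousLinearMap.adjoint_inner_right]

variable (q : ℝ)

section gamma
variable (γ : H →L[ℂ] H)
    (hγ : ∀ (i : ℕ) (j : ℤ), γ (lp.single 2 (i, j) (1 : ℂ))
        = ((q : ℂ) ^ i) • lp.single 2 (i, j + 1) (1 : ℂ))
include hγ

lemma gamma_pow (l : ℕ) (i : ℕ) (j : ℤ) :
    (γ ^ l) (lp.single 2 (i, j) (1:ℂ)) = (((q:ℂ)^i)^l) • lp.single 2 (i, j + l) (1:ℂ) := by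
  induction l generalizing j with
  | zero => simp
  | succ l ih =>
    rw [pow_succ', ContinuousLinearMap.mul_apply, ih, map_smul, hγ, smul_smul]
    rw [← pow_succ]
    congr 2
    push_cast; ring

lemma gammaStar (i : ℕ) (j : ℤ) :
    ContinuousLinearMap.adjoint γ (lp.single 2 (i, j) (1:ℂ))
      = ((q : ℂ) ^ i) • lp.single 2 (i, j - 1) (1:ℂ) := by
  apply lp.ext; funext a
  obtain ⟨i', j'⟩ := a
  rw [adjoint_coord, hγ, inner_smul_left, inner_ss, lp.coeFn_smul, Pi.smul_apply,
    lp.single_apply]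
  simp only [map_pow, Complex.conj_ofReal, smul_eq_mul, Prod.mk.injEq]
  by_cases h : i' = i ∧ j' = j - 1
  · obtain ⟨rfl, rfl⟩ := h
    rw [if_pos ⟨rfl, by omega⟩]
    simp
  · rw [if_neg, Pi.single_eq_of_ne]
    · simp
    · exact fun hc => h ⟨(Prod.mk.inj hc).1, (Prod.mk.inj hc).2⟩
    · rintro ⟨h1, h2⟩; exact h ⟨h1, by omega⟩

lemma gammaStar_pow (m : ℕ) (i : ℕ) (j : ℤ) :
    ((ContinuousLinearMap.adjoint γ) ^ m) (lp.single 2 (i, j) (1:ℂ))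
      = (((q:ℂ)^i)^m) • lp.single 2 (i, j - m) (1:ℂ) := by
  induction m generalizing j with
  | zero => simp
  | succ m ih =>
    rw [pow_succ', ContinuousLinearMap.mul_apply, ih, map_smul, gammaStar q γ hγ, smul_smul,
      ← pow_succ]
    congr 2
    push_cast; ring

end gamma

section alpha
variable (α : H →L[ℂ] H)
    (hα : ∀ (i : ℕ) (j : ℤ), α (lp.single 2 (i, j) (1 : ℂ))
        = ((Real.sqrt (1 - q ^ (2 * i)) : ℝ) : ℂ) • lp.single 2 (i - 1, j) (1 : ℂ))
include hα

lemma alpha_pow (K : ℕ) (i : ℕ) (j : ℤ) :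
    ∃ c : ℂ, (α ^ K) (lp.single 2 (i, j) (1:ℂ)) = c • lp.single 2 (i - K, j) (1:ℂ)
      ∧ (i < K → c = 0) := by
  induction K with
  | zero => exact ⟨1, by simp, by omega⟩
  | succ K ih =>
    obtain ⟨c, hc, hc0⟩ := ih
    refine ⟨c * ((Real.sqrt (1 - q ^ (2 * (i - K))) : ℝ) : ℂ), ?_, ?_⟩
    · rw [pow_succ', ContinuousLinearMap.mul_apply, hc, map_smul, hα, smul_smul, Nat.sub_sub]
    · intro h
      rcases Nat.lt_or_ge i K with h' | h'
      · rw [hc0 h', zero_mul]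
      · have : i - K = 0 := by omega
        rw [this]
        simp
end alpha

end SUq2Aux
end

namespace SUq2Aux
variable (q : ℝ) (α : H →L[ℂ] H)
    (hα : ∀ (i : ℕ) (j : ℤ), α (lp.single 2 (i, j) (1 : ℂ))
        = ((Real.sqrt (1 - q ^ (2 * i)) : ℝ) : ℂ) • lp.single 2 (i - 1, j) (1 : ℂ))
include hα

lemma alphaStar (i : ℕ) (j : ℤ) :
    ContinuousLinearMap.adjoint α (lp.single 2 (i, j) (1:ℂ))
      = ((Real.sqrt (1 - q ^ (2 * (i+1))) : ℝ) : ℂ) • lp.single 2 (i + 1, j) (1:ℂ) := by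
  apply lp.ext; funext a
  obtain ⟨i', j'⟩ := a
  rw [adjoint_coord, hα, inner_smul_left, inner_ss, lp.coeFn_smul, Pi.smul_apply,
    lp.single_apply]
  simp only [Complex.conj_ofReal, smul_eq_mul, Prod.mk.injEq]
  by_cases h : i' = i + 1 ∧ j' = j
  · obtain ⟨rfl, rfl⟩ := h
    rw [if_pos ⟨by omega, rfl⟩]
    simp
  · rw [Pi.single_eq_of_ne (i := (i + 1, j)) (i' := (i', j')) (fun hc => h ⟨(Prod.mk.inj hc).1, (Prod.mk.inj hc).2⟩)]
    by_cases h1 : i' - 1 = i ∧ j' = j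
    · have hi' : i' = 0 := by omega
      have hi : i = 0 := by omega
      subst hi'; subst hi
      rw [if_pos ⟨rfl, h1.2⟩]
      norm_num
    · rw [if_neg (fun hc => h1 ⟨hc.1, hc.2⟩)]
      simp

lemma alphaStar_pow (K : ℕ) (i : ℕ) (j : ℤ) :
    ∃ c : ℂ, ((ContinuousLinearMap.adjoint α) ^ K) (lp.single 2 (i, j) (1:ℂ))
      = c • lp.single 2 (i + K, j) (1:ℂ) := by
  induction K with
  | zero => exact ⟨1, by simp⟩
  | succ K ih =>
    obtain ⟨c, hc⟩ := ih
    refine ⟨c * ((Real.sqrt (1 - q ^ (2 * (i + K + 1))) : ℝ) : ℂ), ?_⟩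
    rw [pow_succ', ContinuousLinearMap.mul_apply, hc, map_smul, alphaStar q α hα, smul_smul]
    rfl

end SUq2Aux

open SUq2Aux in
/-- The Haar state of `SU_q(2)`: with the concrete generators `α, γ` on `ℓ²(ℕ × ℤ)` and
`φ(x) = (1-q²) Σ_k q^{2k} ⟨e_k ⊗ f_0, x (e_k ⊗ f_0)⟩`, the functional `φ` is a state
(`φ(1) = 1` and `φ(x*x) ≥ 0`), and it vanishes on the basis monomials
`α^k γ^l (γ*)^m` (with `α^k := (α*)^{|k|}` for `k < 0`) unless `k = 0` and `l = m`. -/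
theorem stmt12 (q : ℝ) (hq : q ∈ Set.Ioo (-1 : ℝ) 1) (hq0 : q ≠ 0)
    (α γ : lp (fun _ : ℕ × ℤ => ℂ) 2 →L[ℂ] lp (fun _ : ℕ × ℤ => ℂ) 2)
    (hα : ∀ (i : ℕ) (j : ℤ), α (lp.single 2 (i, j) (1 : ℂ))
        = ((Real.sqrt (1 - q ^ (2 * i)) : ℝ) : ℂ) • lp.single 2 (i - 1, j) (1 : ℂ))
    (hγ : ∀ (i : ℕ) (j : ℤ), γ (lp.single 2 (i, j) (1 : ℂ))
        = ((q : ℂ) ^ i) • lp.single 2 (i, j + 1) (1 : ℂ))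
    (φ : (lp (fun _ : ℕ × ℤ => ℂ) 2 →L[ℂ] lp (fun _ : ℕ × ℤ => ℂ) 2) → ℂ)
    (hφ : ∀ x, φ x = (1 - (q : ℂ) ^ 2) * ∑' k : ℕ,
        (q : ℂ) ^ (2 * k) *
          (inner ℂ (lp.single 2 (k, (0 : ℤ)) (1 : ℂ)) (x (lp.single 2 (k, (0 : ℤ)) (1 : ℂ))) : ℂ)) :
    φ 1 = 1 ∧
    (∀ x, 0 ≤ φ (ContinuousLinearMap.adjoint x * x)) ∧
    (∀ (k : ℤ) (l m : ℕ), (k ≠ 0 ∨ l ≠ m) →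
      φ ((if 0 ≤ k then α ^ k.toNat else (ContinuousLinearMap.adjoint α) ^ (-k).toNat)
          * γ ^ l * (ContinuousLinearMap.adjoint γ) ^ m) = 0) := by
  obtain ⟨hq1, hq2⟩ := hq
  have hqsq : q ^ 2 < 1 := by nlinarith
  have hcast : (1 - (q:ℂ) ^ 2) = ((1 - q ^ 2 : ℝ) : ℂ) := by push_cast; ring
  have hpos : (0:ℝ) < 1 - q ^ 2 := by nlinarith
  have hne : (1 - (q:ℂ) ^ 2) ≠ 0 := by
    rw [hcast]
    exact_mod_cast hpos.ne'
  refine ⟨?_, ?_, ?_⟩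
  · rw [hφ]
    have h1 : ∀ k : ℕ, (q : ℂ) ^ (2 * k) *
        (inner ℂ (lp.single 2 (k, (0 : ℤ)) (1 : ℂ))
          ((1 : lp (fun _ : ℕ × ℤ => ℂ) 2 →L[ℂ] lp (fun _ : ℕ × ℤ => ℂ) 2)
            (lp.single 2 (k, (0 : ℤ)) (1 : ℂ))) : ℂ) = ((q:ℂ)^2)^k := by
      intro k
      rw [ContinuousLinearMap.one_apply, inner_ss, if_pos rfl, mul_one, pow_mul]
    rw [tsum_congr h1, tsum_geometric_of_norm_lt_one ?hn, mul_inv_cancel₀ hne]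
    case hn =>
      rw [norm_pow, Complex.norm_real, Real.norm_eq_abs]
      nlinarith [abs_nonneg q, sq_abs q]
  · intro x
    rw [hφ]
    apply mul_nonneg
    · rw [hcast]
      exact_mod_cast Complex.zero_le_real.2 (by nlinarith)
    · apply tsum_nonneg
      intro k
      rw [ContinuousLinearMap.mul_apply, ContinuousLinearMap.adjoint_inner_right]
      have h1 : (q : ℂ) ^ (2 * k) = ((q ^ (2 * k) : ℝ) : ℂ) := by push_cast; ring
      rw [h1, Complex.nonneg_iff]
      set v := x (lp.single 2 ((k : ℕ), (0 : ℤ)) (1 : ℂ)) with hv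
      have him : (inner ℂ v v : ℂ).im = 0 := inner_self_im (𝕜 := ℂ) v
      have hre : 0 ≤ (inner ℂ v v : ℂ).re := inner_self_nonneg (𝕜 := ℂ)
      constructor
      · rw [Complex.re_ofReal_mul]
        refine mul_nonneg ?_ hre
        rw [pow_mul]; positivity
      · rw [Complex.im_ofReal_mul, him, mul_zero]
  · intro k l m hkl
    rw [hφ]
    have hz : ∀ n : ℕ, (q : ℂ) ^ (2 * n) *
        (inner ℂ (lp.single 2 (n, (0 : ℤ)) (1 : ℂ))
          (((if 0 ≤ k then α ^ k.toNat else (ContinuousLinearMap.adjoint α) ^ (-k).toNat)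
            * γ ^ l * (ContinuousLinearMap.adjoint γ) ^ m)
            (lp.single 2 (n, (0 : ℤ)) (1 : ℂ))) : ℂ) = 0 := by
      intro n
      rw [ContinuousLinearMap.mul_apply, ContinuousLinearMap.mul_apply,
        gammaStar_pow q γ hγ m n 0, map_smul, gamma_pow q γ hγ l n (0 - m), map_smul,
        map_smul, inner_smul_right, inner_smul_right]
      by_cases hk0 : 0 ≤ k
      · rw [if_pos hk0]
        by_cases hk : k = 0
        · subst hk
          have hlm : l ≠ m := by tauto
          simp only [Int.toNat_zero, pow_zero, ContinuousLinearMap.one_apply]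
          rw [inner_ss, if_neg, mul_zero, mul_zero, mul_zero]
          simp only [Prod.mk.injEq]
          rintro ⟨-, h2⟩
          omega
        · obtain ⟨c, hc, -⟩ := alpha_pow q α hα k.toNat n (0 - m + l)
          rcases Nat.lt_or_ge n k.toNat with hn | hn
          · obtain ⟨c, hc, hc0⟩ := alpha_pow q α hα k.toNat n (0 - m + l)
            rw [hc, hc0 hn, zero_smul, inner_zero_right, mul_zero, mul_zero, mul_zero]
          · rw [hc, inner_smul_right, inner_ss, if_neg, mul_zero, mul_zero, mul_zero, mul_zero]
            simp only [Prod.mk.injEq]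
            rintro ⟨h1, -⟩
            have : k.toNat ≠ 0 := by omega
            omega
      · rw [if_neg hk0]
        obtain ⟨c, hc⟩ := alphaStar_pow q α hα (-k).toNat n (0 - m + l)
        rw [hc, inner_smul_right, inner_ss, if_neg, mul_zero, mul_zero, mul_zero, mul_zero]
        simp only [Prod.mk.injEq]
        rintro ⟨h1, -⟩
        have : (-k).toNat ≠ 0 := by omega
        omega
    rw [tsum_congr hz, tsum_zero, mul_zero]
end

section
/- Let H = ℓ²(ℕ) ⊗ ℓ²(ℤ), let ζ_k : 𝕋 → ℂ be ζ_k(z) = z^k, and define the unitary U = Σ_{i≥0} e_{i,i} ⊗ 1 ⊗ ζ_i acting on H ⊗ L²(𝕋), and π(x) = U*(x ⊗ 1)U for x ∈ B(H). Then for the SU_q(2) monomials, π(α^k γ^l (γ*)^m) = α^k γ^l (γ*)^m ⊗ ζ_k (acting on H ⊗ L²(𝕋)), where ζ_k acts as the multiplication operator on L²(𝕋). -/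
set_option maxHeartbeats 1000000


noncomputable section
namespace Stmt14Aux

local notation "⟪" x ", " y "⟫" => @inner ℂ _ _ x y

variable {ι : Type*} [DecidableEq ι]

lemma single_apply' (p : ι) (a : ℂ) (p' : ι) :
    (lp.single 2 p a : lp (fun _ : ι => ℂ) 2) p' = if p' = p then a else 0 := by
  by_cases h : p' = p
  · subst h; simp [lp.single_apply_self]
  · rw [lp.single_apply]; simp [h]

lemma coord (v : lp (fun _ : ι => ℂ) 2) (p : ι) :
    ⟪(lp.single 2 p (1 : ℂ) : lp (fun _ : ι => ℂ) 2), v⟫ = v p := by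
  rw [lp.inner_single_left]
  simp [RCLike.inner_apply]

lemma inner_single_single (p p' : ι) :
    ⟪(lp.single 2 p (1 : ℂ) : lp (fun _ : ι => ℂ) 2), lp.single 2 p' (1 : ℂ)⟫
      = if p = p' then (1 : ℂ) else 0 := by
  rw [coord, single_apply']

lemma vec_ext {v w : lp (fun _ : ι => ℂ) 2}
    (h : ∀ p : ι, ⟪(lp.single 2 p (1 : ℂ) : lp (fun _ : ι => ℂ) 2), v⟫
      = ⟪(lp.single 2 p (1 : ℂ) : lp (fun _ : ι => ℂ) 2), w⟫) : v = w := by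
  apply lp.ext
  funext p
  have := h p
  rwa [coord, coord] at this

lemma clm_ext_single (A B : lp (fun _ : ι => ℂ) 2 →L[ℂ] lp (fun _ : ι => ℂ) 2)
    (h : ∀ p : ι, A (lp.single 2 p 1) = B (lp.single 2 p 1)) : A = B := by
  refine ContinuousLinearMap.ext fun f => ?_
  have hs := lp.hasSum_single (E := fun _ : ι => ℂ) (p := 2) (by norm_num) f
  have key : ∀ p : ι, A (lp.single 2 p (f p)) = B (lp.single 2 p (f p)) := by
    intro p
    have h1 : lp.single 2 p (f p) = (f p) • (lp.single 2 p (1 : ℂ) : lp (fun _ : ι => ℂ) 2) := by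
      rw [← lp.single_smul]; norm_num
    rw [h1, map_smul, map_smul, h p]
  have hfun : (fun p : ι => A (lp.single 2 p (f p))) = fun p => B (lp.single 2 p (f p)) :=
    funext key
  have hB : HasSum (fun p : ι => A (lp.single 2 p (f p))) (B f) := by
    rw [hfun]; exact hs.mapL B
  exact (hs.mapL A).unique hB


/-! ### Shift structure of the generators -/

abbrev X := lp (fun _ : ℕ × ℤ => ℂ) 2

/-- `x` maps each basis vector `e_{(i,j)}` to a multiple of a basis vector whose first
index is `i + d` (whenever the multiple is nonzero). -/
def Shifts (x : X →L[ℂ] X) (d : ℤ) : Prop :=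
  ∀ (i : ℕ) (j : ℤ), ∃ (c : ℂ) (i₂ : ℕ) (j₂ : ℤ),
    x (lp.single 2 (i, j) (1 : ℂ)) = c • lp.single 2 (i₂, j₂) (1 : ℂ) ∧
    (c ≠ 0 → (i₂ : ℤ) = (i : ℤ) + d)

lemma Shifts.mul {x y : X →L[ℂ] X} {d e : ℤ} (hx : Shifts x d) (hy : Shifts y e) :
    Shifts (x * y) (d + e) := by
  intro i j
  obtain ⟨c, i₂, j₂, h1, h2⟩ := hy i j
  obtain ⟨c', i₃, j₃, h3, h4⟩ := hx i₂ j₂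
  refine ⟨c * c', i₃, j₃, ?_, ?_⟩
  · rw [ContinuousLinearMap.mul_apply, h1, map_smul, h3, smul_smul]
  · intro hcc
    have hc : c ≠ 0 := fun h => hcc (by simp [h])
    have hc' : c' ≠ 0 := fun h => hcc (by simp [h])
    have := h2 hc; have := h4 hc'
    omega

lemma Shifts.one : Shifts 1 0 := by
  intro i j
  exact ⟨1, i, j, by simp, fun _ => by simp⟩

lemma Shifts.pow {x : X →L[ℂ] X} {d : ℤ} (hx : Shifts x d) (n : ℕ) :
    Shifts (x ^ n) (n * d) := by
  induction n with
  | zero => simpa using Shifts.one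
  | succ n ih =>
    have := ih.mul hx
    rw [← pow_succ] at this
    have he : ((n + 1 : ℕ) : ℤ) * d = (n : ℤ) * d + d := by push_cast; ring
    rw [he]; exact this


variable {q : ℝ}

lemma gamma_adj {γ : X →L[ℂ] X}
    (hγ : ∀ (i : ℕ) (j : ℤ), γ (lp.single 2 (i, j) (1 : ℂ))
        = ((q : ℂ) ^ i) • lp.single 2 (i, j + 1) (1 : ℂ)) (i : ℕ) (j : ℤ) :
    ContinuousLinearMap.adjoint γ (lp.single 2 (i, j) (1 : ℂ))
      = ((q : ℂ) ^ i) • lp.single 2 (i, j - 1) (1 : ℂ) := by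
  apply vec_ext
  rintro ⟨a, b⟩
  rw [ContinuousLinearMap.adjoint_inner_right, hγ, inner_smul_left, inner_smul_right,
    inner_single_single, inner_single_single]
  by_cases h : a = i ∧ b = j - 1
  · obtain ⟨rfl, rfl⟩ := h
    have h1 : (a, j - 1 + 1) = (a, j) := by norm_num
    have h2 : ((a : ℕ), (j - 1 : ℤ)) = (a, j - 1) := rfl
    rw [if_pos h1, if_pos h2]
    simp [Complex.conj_ofReal, map_pow]
  · have h1 : (a, b + 1) ≠ ((i : ℕ), (j : ℤ)) := by
      intro heq
      rw [Prod.mk.injEq] at heq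
      exact h ⟨heq.1, by omega⟩
    have h2 : ((a : ℕ), (b : ℤ)) ≠ (i, j - 1) := by
      intro heq
      rw [Prod.mk.injEq] at heq
      exact h ⟨heq.1, heq.2⟩
    rw [if_neg h1, if_neg h2]
    simp

lemma alpha_adj {α : X →L[ℂ] X}
    (hα : ∀ (i : ℕ) (j : ℤ), α (lp.single 2 (i, j) (1 : ℂ))
        = ((Real.sqrt (1 - q ^ (2 * i)) : ℝ) : ℂ) • lp.single 2 (i - 1, j) (1 : ℂ))
    (i : ℕ) (j : ℤ) :
    ContinuousLinearMap.adjoint α (lp.single 2 (i, j) (1 : ℂ))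
      = ((Real.sqrt (1 - q ^ (2 * (i + 1))) : ℝ) : ℂ) • lp.single 2 (i + 1, j) (1 : ℂ) := by
  apply vec_ext
  rintro ⟨a, b⟩
  rw [ContinuousLinearMap.adjoint_inner_right, hα, inner_smul_left, inner_smul_right,
    inner_single_single, inner_single_single]
  by_cases h : a = i + 1 ∧ b = j
  · obtain ⟨rfl, rfl⟩ := h
    have h1 : ((i + 1 - 1 : ℕ), (b : ℤ)) = (i, b) := by norm_num
    have h2 : ((i + 1 : ℕ), (b : ℤ)) = (i + 1, b) := rfl
    rw [if_pos h1, if_pos h2]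
    simp [Complex.conj_ofReal]
  · have h2 : ((a : ℕ), (b : ℤ)) ≠ (i + 1, j) := by
      intro heq
      rw [Prod.mk.injEq] at heq
      exact h ⟨heq.1, heq.2⟩
    rw [if_neg h2]
    by_cases h1 : ((a - 1 : ℕ), (b : ℤ)) = (i, j)
    · -- then a = 0 and i = 0, so the coefficient vanishes
      have ha : a = 0 := by
        rw [Prod.mk.injEq] at h1
        by_contra hne
        exact h ⟨by omega, h1.2⟩
      subst ha
      rw [if_pos h1]
      norm_num
    · rw [if_neg h1]; simp

lemma shifts_gamma {γ : X →L[ℂ] X}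
    (hγ : ∀ (i : ℕ) (j : ℤ), γ (lp.single 2 (i, j) (1 : ℂ))
        = ((q : ℂ) ^ i) • lp.single 2 (i, j + 1) (1 : ℂ)) : Shifts γ 0 :=
  fun i j => ⟨(q : ℂ) ^ i, i, j + 1, hγ i j, fun _ => by omega⟩

lemma shifts_gamma_adj {γ : X →L[ℂ] X}
    (hγ : ∀ (i : ℕ) (j : ℤ), γ (lp.single 2 (i, j) (1 : ℂ))
        = ((q : ℂ) ^ i) • lp.single 2 (i, j + 1) (1 : ℂ)) :
    Shifts (ContinuousLinearMap.adjoint γ) 0 :=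
  fun i j => ⟨(q : ℂ) ^ i, i, j - 1, gamma_adj hγ i j, fun _ => by omega⟩

lemma shifts_alpha {α : X →L[ℂ] X}
    (hα : ∀ (i : ℕ) (j : ℤ), α (lp.single 2 (i, j) (1 : ℂ))
        = ((Real.sqrt (1 - q ^ (2 * i)) : ℝ) : ℂ) • lp.single 2 (i - 1, j) (1 : ℂ)) :
    Shifts α (-1) := by
  intro i j
  refine ⟨_, i - 1, j, hα i j, fun hc => ?_⟩
  have hi : i ≠ 0 := by
    rintro rfl
    simp at hc
  omega

lemma shifts_alpha_adj {α : X →L[ℂ] X}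
    (hα : ∀ (i : ℕ) (j : ℤ), α (lp.single 2 (i, j) (1 : ℂ))
        = ((Real.sqrt (1 - q ^ (2 * i)) : ℝ) : ℂ) • lp.single 2 (i - 1, j) (1 : ℂ)) :
    Shifts (ContinuousLinearMap.adjoint α) 1 :=
  fun i j => ⟨_, i + 1, j, alpha_adj hα i j, fun _ => by omega⟩

end Stmt14Aux

end

/-- Transference identity for `SU_q(2)`: modelling `ℓ²(ℕ) ⊗ ℓ²(ℤ) ⊗ L²(𝕋)` as
`ℓ²(ℕ × ℤ × ℤ)` (via the Fourier basis of `L²(𝕋)`), with `U = Σ_i e_{ii} ⊗ 1 ⊗ ζ_i`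
(so `U(e_i ⊗ f_j ⊗ g_n) = e_i ⊗ f_j ⊗ g_{n+i}`), the amplification `amp x = x ⊗ 1`, and
`Z = 1 ⊗ 1 ⊗ ζ_k` the multiplication operator by `ζ_k` on the last leg, one has
`π(α^k γ^l (γ*)^m) = U* (α^k γ^l (γ*)^m ⊗ 1) U = (α^k γ^l (γ*)^m ⊗ 1)(1 ⊗ ζ_k)`,
i.e. `π` of the monomial equals `α^k γ^l (γ*)^m ⊗ ζ_k`. -/
theorem stmt14 (q : ℝ) (hq : q ∈ Set.Ioo (-1 : ℝ) 1) (hq0 : q ≠ 0)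
    (α γ : lp (fun _ : ℕ × ℤ => ℂ) 2 →L[ℂ] lp (fun _ : ℕ × ℤ => ℂ) 2)
    (hα : ∀ (i : ℕ) (j : ℤ), α (lp.single 2 (i, j) (1 : ℂ))
        = ((Real.sqrt (1 - q ^ (2 * i)) : ℝ) : ℂ) • lp.single 2 (i - 1, j) (1 : ℂ))
    (hγ : ∀ (i : ℕ) (j : ℤ), γ (lp.single 2 (i, j) (1 : ℂ))
        = ((q : ℂ) ^ i) • lp.single 2 (i, j + 1) (1 : ℂ))
    (k : ℤ) (l m : ℕ)
    (amp : (lp (fun _ : ℕ × ℤ => ℂ) 2 →L[ℂ] lp (fun _ : ℕ × ℤ => ℂ) 2)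
         → (lp (fun _ : ℕ × ℤ × ℤ => ℂ) 2 →L[ℂ] lp (fun _ : ℕ × ℤ × ℤ => ℂ) 2))
    (hamp : ∀ (x : lp (fun _ : ℕ × ℤ => ℂ) 2 →L[ℂ] lp (fun _ : ℕ × ℤ => ℂ) 2)
      (i i' : ℕ) (j j' n n' : ℤ),
      (inner ℂ (lp.single 2 (i, j, n) (1 : ℂ)) ((amp x) (lp.single 2 (i', j', n') (1 : ℂ))) : ℂ)
        = (if n = n' then (1 : ℂ) else 0)
          * (inner ℂ (lp.single 2 (i, j) (1 : ℂ)) (x (lp.single 2 (i', j') (1 : ℂ))) : ℂ))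
    (U : lp (fun _ : ℕ × ℤ × ℤ => ℂ) 2 →L[ℂ] lp (fun _ : ℕ × ℤ × ℤ => ℂ) 2)
    (hU : ∀ (i : ℕ) (j n : ℤ),
      U (lp.single 2 (i, j, n) (1 : ℂ)) = lp.single 2 (i, j, n + (i : ℤ)) (1 : ℂ))
    (Z : lp (fun _ : ℕ × ℤ × ℤ => ℂ) 2 →L[ℂ] lp (fun _ : ℕ × ℤ × ℤ => ℂ) 2)
    (hZ : ∀ (i : ℕ) (j n : ℤ),
      Z (lp.single 2 (i, j, n) (1 : ℂ)) = lp.single 2 (i, j, n + k) (1 : ℂ)) :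
    (ContinuousLinearMap.adjoint U).comp
        ((amp ((if 0 ≤ k then α ^ k.toNat else (ContinuousLinearMap.adjoint α) ^ (-k).toNat)
            * γ ^ l * (ContinuousLinearMap.adjoint γ) ^ m)).comp U)
      = (amp ((if 0 ≤ k then α ^ k.toNat else (ContinuousLinearMap.adjoint α) ^ (-k).toNat)
            * γ ^ l * (ContinuousLinearMap.adjoint γ) ^ m)).comp Z := by
  classical
  have hshift : Stmt14Aux.Shifts
      ((if 0 ≤ k then α ^ k.toNat else (ContinuousLinearMap.adjoint α) ^ (-k).toNat)
        * γ ^ l * (ContinuousLinearMap.adjoint γ) ^ m) (-k) := by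
    have h1 : Stmt14Aux.Shifts
        (if 0 ≤ k then α ^ k.toNat else (ContinuousLinearMap.adjoint α) ^ (-k).toNat) (-k) := by
      by_cases hk : 0 ≤ k
      · rw [if_pos hk]
        have h := (Stmt14Aux.shifts_alpha hα).pow k.toNat
        have he : (k.toNat : ℤ) * (-1) = -k := by omega
        rwa [he] at h
      · rw [if_neg hk]
        have h := (Stmt14Aux.shifts_alpha_adj hα).pow (-k).toNat
        have he : ((-k).toNat : ℤ) * 1 = -k := by omega
        rwa [he] at h
    have h2 := (Stmt14Aux.shifts_gamma hγ).pow l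
    have h3 := (Stmt14Aux.shifts_gamma_adj hγ).pow m
    have h := (h1.mul h2).mul h3
    have he : (-k + (l : ℤ) * 0) + (m : ℤ) * 0 = -k := by ring
    rwa [he] at h
  apply Stmt14Aux.clm_ext_single
  rintro ⟨i', j', n'⟩
  simp only [ContinuousLinearMap.comp_apply]
  rw [hU, hZ]
  apply Stmt14Aux.vec_ext
  rintro ⟨i, j, n⟩
  rw [ContinuousLinearMap.adjoint_inner_right, hU, hamp, hamp]
  obtain ⟨c, i₂, j₂, hx1, hx2⟩ := hshift i' j'
  rw [hx1, inner_smul_right, Stmt14Aux.inner_single_single]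
  by_cases hc : c = 0
  · simp [hc]
  have hi₂ := hx2 hc
  by_cases hij : ((i : ℕ), (j : ℤ)) = (i₂, j₂)
  · rw [Prod.mk.injEq] at hij
    have hii : (i : ℤ) = (i₂ : ℤ) := by rw [hij.1]
    have hiff : (n + (i : ℤ) = n' + (i' : ℤ)) ↔ (n = n' + k) := by omega
    rw [if_congr hiff rfl rfl]
  · rw [if_neg hij]
    simp
end
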